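/- arXiv:1905.12631 — 4 statements merged into one kernel-verified Lean document; each statement's English description precedes it below -/
import Mathlib

section
/- For every imaginary octonion unit eᵢ (i = 1, …, 7) and all reals α₁, α₂, α₃: (((eᵢ·exp(−e₁α₁))·exp(−e₂α₂))·exp(−e₄α₃))·exp(e₄β₃) = ((eᵢ·exp(−e₁α₁))·exp(−e₂α₂))·(exp(−e₄α₃)·exp(e₄β₃)) for all reals β₃ (and the analogous re-association identities hold for the e₂ and e₁ factors). -/
noncomputable section
open MeasureTheory Real

/-- Octonions as the Cayley–Dickson double of the quaternions:
pairs of quaternions with the Cayley–Dickson product `omul`.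
(The additive, scalar and topological structure is the product structure.) -/
abbrev Octonion : Type := Quaternion ℝ × Quaternion ℝ

/-- Cayley–Dickson multiplication of octonions. -/
def omul (x y : Octonion) : Octonion :=
  (x.1 * y.1 - star y.2 * x.2, y.2 * x.1 + x.2 * star y.1)

/-- The octonion `1`. -/
def oone : Octonion := (1, 0)

/-- Octonion conjugation. -/
def oconj (x : Octonion) : Octonion := (star x.1, -x.2)

/-- Real part of an octonion. -/
def ore (x : Octonion) : ℝ := x.1.re

/-- `o · o*`, as a real number (its imaginary part vanishes). -/
def onormSq (x : Octonion) : ℝ := ore (omul x (oconj x))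

/-- The octonion norm `|o| = √(o·o*)`. -/
def oabs (x : Octonion) : ℝ := Real.sqrt (onormSq x)

/-- Inverse of a (nonzero) octonion. -/
def oinv (x : Octonion) : Octonion := (onormSq x)⁻¹ • oconj x

def e1 : Octonion := ((⟨0,1,0,0⟩ : Quaternion ℝ), 0)
def e2 : Octonion := ((⟨0,0,1,0⟩ : Quaternion ℝ), 0)
def e3 : Octonion := ((⟨0,0,0,1⟩ : Quaternion ℝ), 0)
def e4 : Octonion := (0, (⟨1,0,0,0⟩ : Quaternion ℝ))
def e5 : Octonion := (0, (⟨0,1,0,0⟩ : Quaternion ℝ))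
def e6 : Octonion := (0, (⟨0,0,1,0⟩ : Quaternion ℝ))
def e7 : Octonion := (0, (⟨0,0,0,1⟩ : Quaternion ℝ))

/-- Powers of an octonion (well defined since octonions are power-associative). -/
def opow (o : Octonion) : ℕ → Octonion
  | 0 => oone
  | n + 1 => omul o (opow o n)

/-- The octonion exponential `exp o = ∑ oᵏ/k!`. -/
def octExp (o : Octonion) : Octonion :=
  ∑' k : ℕ, ((k.factorial : ℝ)⁻¹) • opow o k

/-- The octonion Fourier transform of `u : ℝ³ → 𝕆`,
with octonion products evaluated left to right. -/
def OFT (u : ℝ × ℝ × ℝ → Octonion) (f : ℝ × ℝ × ℝ) : Octonion :=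
  ∫ x : ℝ × ℝ × ℝ,
    omul (omul (omul (u x) (octExp ((-(2 * π * f.1 * x.1)) • e1)))
        (octExp ((-(2 * π * f.2.1 * x.2.1)) • e2)))
      (octExp ((-(2 * π * f.2.2 * x.2.2)) • e4))

-- bilinearity lemmas
lemma omul_oone (x : Octonion) : omul x oone = x := by
  simp [omul, oone]

lemma oone_omul (x : Octonion) : omul oone x = x := by
  simp [omul, oone]

lemma omul_smul_left (r : ℝ) (x y : Octonion) : omul (r • x) y = r • omul x y := by
  simp [omul, Prod.smul_def, smul_sub, smul_add, mul_smul_comm, smul_mul_assoc]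

lemma omul_smul_right (r : ℝ) (x y : Octonion) : omul x (r • y) = r • omul x y := by
  simp [omul, Prod.smul_def, smul_sub, smul_add, mul_smul_comm, smul_mul_assoc, star_smul]

lemma omul_add_left (x y z : Octonion) : omul (x + y) z = omul x z + omul y z := by
  simp [omul, Prod.ext_iff]; constructor <;> first | noncomm_ring | abel

lemma omul_add_right (x y z : Octonion) : omul x (y + z) = omul x y + omul x z := by
  simp [omul, Prod.ext_iff]; constructor <;> first | noncomm_ring | abel

lemma omul_neg_right (x y : Octonion) : omul x (-y) = - omul x y := by
  simp [omul, Prod.ext_iff]; constructor <;> first | noncomm_ring | abel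

lemma halt_e1 : ∀ y : Octonion, omul (omul y e1) e1 = -y := by
  intro y
  simp only [omul, e1, Prod.ext_iff]
  obtain ⟨i, hi⟩ : ∃ i : Quaternion ℝ, i = ⟨0,1,0,0⟩ := ⟨_, rfl⟩
  rw [← hi]
  have h0 : i.re = 0 := by rw [hi]
  have h1 : i.imI = 1 := by rw [hi]
  have h2 : i.imJ = 0 := by rw [hi]
  have h3 : i.imK = 0 := by rw [hi]
  constructor <;> apply Quaternion.ext <;>
    simp [h0, h1, h2, h3, Quaternion.re_mul, Quaternion.imI_mul, Quaternion.imJ_mul,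
      Quaternion.imK_mul] <;> ring

lemma halt_e2 : ∀ y : Octonion, omul (omul y e2) e2 = -y := by
  intro y
  simp only [omul, e2, Prod.ext_iff]
  obtain ⟨i, hi⟩ : ∃ i : Quaternion ℝ, i = ⟨0,0,1,0⟩ := ⟨_, rfl⟩
  rw [← hi]
  have h0 : i.re = 0 := by rw [hi]
  have h1 : i.imI = 0 := by rw [hi]
  have h2 : i.imJ = 1 := by rw [hi]
  have h3 : i.imK = 0 := by rw [hi]
  constructor <;> apply Quaternion.ext <;>
    simp [h0, h1, h2, h3, Quaternion.re_mul, Quaternion.imI_mul, Quaternion.imJ_mul,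
      Quaternion.imK_mul] <;> ring

lemma halt_e4 : ∀ y : Octonion, omul (omul y e4) e4 = -y := by
  intro y
  simp only [omul, e4, Prod.ext_iff]
  obtain ⟨i, hi⟩ : ∃ i : Quaternion ℝ, i = ⟨1,0,0,0⟩ := ⟨_, rfl⟩
  rw [← hi]
  have h0 : i.re = 1 := by rw [hi]
  have h1 : i.imI = 0 := by rw [hi]
  have h2 : i.imJ = 0 := by rw [hi]
  have h3 : i.imK = 0 := by rw [hi]
  constructor <;> apply Quaternion.ext <;>
    simp [h0, h1, h2, h3, Quaternion.re_mul, Quaternion.imI_mul, Quaternion.imJ_mul,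
      Quaternion.imK_mul] <;> ring

lemma hsq_of_halt {e : Octonion} (halt : ∀ y, omul (omul y e) e = -y) :
    omul e e = -oone := by
  have := halt oone
  rwa [oone_omul] at this

lemma opow_formula {e : Octonion} (halt : ∀ y, omul (omul y e) e = -y) (t : ℝ) (n : ℕ) :
    opow (t • e) (2 * n) = ((-1 : ℝ) ^ n * t ^ (2 * n)) • oone ∧
    opow (t • e) (2 * n + 1) = ((-1 : ℝ) ^ n * t ^ (2 * n + 1)) • e := by
  have hsq := hsq_of_halt halt
  induction n with
  | zero => simp [opow, omul_smul_left, omul_oone]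
  | succ n ih =>
    have h1 : opow (t • e) (2 * (n + 1)) = ((-1 : ℝ) ^ (n + 1) * t ^ (2 * (n + 1))) • oone := by
      have : 2 * (n + 1) = (2 * n + 1) + 1 := by ring
      rw [this, opow, ih.2, omul_smul_left, omul_smul_right, hsq, smul_smul]
      rw [smul_neg, ← neg_smul]
      congr 1
      ring
    refine ⟨h1, ?_⟩
    show omul (t • e) (opow (t • e) (2 * (n + 1))) = _
    rw [h1, omul_smul_left, omul_smul_right, omul_oone, smul_smul]
    congr 1
    ring

lemma octExp_smul {e : Octonion} (halt : ∀ y, omul (omul y e) e = -y) (t : ℝ) :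
    octExp (t • e) = Real.cos t • oone + Real.sin t • e := by
  set f : ℕ → Octonion := fun k => ((k.factorial : ℝ)⁻¹) • opow (t • e) k with hf
  have heven : HasSum (fun n : ℕ => f (2 * n)) (Real.cos t • oone) := by
    have h := (Real.hasSum_cos t).smul_const (oone : Octonion)
    refine h.congr_fun fun n => ?_
    rw [hf]
    simp only []
    rw [(opow_formula halt t n).1, smul_smul]
    congr 1
    field_simp
  have hodd : HasSum (fun n : ℕ => f (2 * n + 1)) (Real.sin t • e) := by
    have h := (Real.hasSum_sin t).smul_const (e : Octonion)
    refine h.congr_fun fun n => ?_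
    rw [hf]
    simp only []
    rw [(opow_formula halt t n).2, smul_smul]
    congr 1
    field_simp
  have := (heven.even_add_odd hodd).tsum_eq
  rw [octExp]
  exact this

lemma reassoc {e : Octonion} (halt : ∀ y, omul (omul y e) e = -y)
    (x : Octonion) (α β : ℝ) :
    omul (omul x (octExp ((-α) • e))) (octExp (β • e)) =
      omul x (omul (octExp ((-α) • e)) (octExp (β • e))) := by
  have hsq := hsq_of_halt halt
  rw [octExp_smul halt, octExp_smul halt]
  simp only [omul_add_left, omul_add_right, omul_smul_left, omul_smul_right, omul_oone,
    oone_omul, smul_add, smul_smul, halt x, hsq, smul_neg, omul_neg_right]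

theorem octonion_kernel_reassoc (ei : Octonion)
    (h : ei ∈ ({e1, e2, e3, e4, e5, e6, e7} : Set Octonion))
    (α₁ α₂ α₃ β₁ β₂ β₃ : ℝ) :
    omul (omul (omul (omul ei (octExp ((-α₁) • e1))) (octExp ((-α₂) • e2)))
          (octExp ((-α₃) • e4))) (octExp (β₃ • e4)) =
      omul (omul (omul ei (octExp ((-α₁) • e1))) (octExp ((-α₂) • e2)))
        (omul (octExp ((-α₃) • e4)) (octExp (β₃ • e4))) ∧
    omul (omul (omul ei (octExp ((-α₁) • e1))) (octExp ((-α₂) • e2)))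
        (octExp (β₂ • e2)) =
      omul (omul ei (octExp ((-α₁) • e1)))
        (omul (octExp ((-α₂) • e2)) (octExp (β₂ • e2))) ∧
    omul (omul ei (octExp ((-α₁) • e1))) (octExp (β₁ • e1)) =
      omul ei (omul (octExp ((-α₁) • e1)) (octExp (β₁ • e1))) :=
  ⟨reassoc halt_e4 _ α₃ β₃, reassoc halt_e2 _ α₂ β₂, reassoc halt_e1 _ α₁ β₁⟩
end
end

section
/- For every octonion o and all reals α₁, α₂, α₃, one has (((o·e₂)·exp(−e₁α₁))·exp(−e₂α₂))·exp(−e₄α₃) = (((o·exp(e₁α₁))·exp(−e₂α₂))·exp(e₄α₃))·e₂, with products evaluated left to right. -/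
noncomputable section
open MeasureTheory Real

def emb1 : ℂ →L[ℝ] Octonion := LinearMap.toContinuousLinearMap
  { toFun := fun z => ((⟨z.re, z.im, 0, 0⟩ : Quaternion ℝ), 0)
    map_add' := by intro a b; ext <;> simp <;> erw [QuaternionAlgebra.mk_add_mk] <;> simp
    map_smul' := by intro a b; ext <;> simp <;> erw [QuaternionAlgebra.smul_mk] <;> simp }

def emb2 : ℂ →L[ℝ] Octonion := LinearMap.toContinuousLinearMap
  { toFun := fun z => ((⟨z.re, 0, z.im, 0⟩ : Quaternion ℝ), 0)
    map_add' := by intro a b; ext <;> simp <;> erw [QuaternionAlgebra.mk_add_mk] <;> simp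
    map_smul' := by intro a b; ext <;> simp <;> erw [QuaternionAlgebra.smul_mk] <;> simp }

def emb4 : ℂ →L[ℝ] Octonion := LinearMap.toContinuousLinearMap
  { toFun := fun z => ((⟨z.re, 0, 0, 0⟩ : Quaternion ℝ), (⟨z.im, 0, 0, 0⟩ : Quaternion ℝ))
    map_add' := by intro a b; ext <;> simp <;> erw [QuaternionAlgebra.mk_add_mk] <;> simp
    map_smul' := by intro a b; ext <;> simp <;> erw [QuaternionAlgebra.smul_mk] <;> simp }

lemma octExp_emb (φ : ℂ →L[ℝ] Octonion) (h1 : φ 1 = oone)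
    (hm : ∀ z w, omul (φ z) (φ w) = φ (z * w)) (z : ℂ) :
    octExp (φ z) = φ (Complex.exp z) := by
  have hpow : ∀ k, opow (φ z) k = φ (z ^ k) := by
    intro k
    induction k with
    | zero => simpa [opow] using h1.symm
    | succ n ih => rw [opow, ih, hm, ← pow_succ']
  rw [octExp]
  simp_rw [hpow, ← _root_.map_smul]
  rw [← φ.map_tsum (NormedSpace.expSeries_summable' (𝕂 := ℝ) z)]
  congr 1
  have : NormedSpace.exp z = ∑' n : ℕ, ((n.factorial : ℝ)⁻¹) • z ^ n := by
    rw [NormedSpace.exp_eq_tsum (𝕂 := ℝ)]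
  rw [← this, ← Complex.exp_eq_exp_ℂ]

lemma emb1_mul : ∀ z w, omul (emb1 z) (emb1 w) = emb1 (z * w) := by
  intro z w
  simp only [emb1, LinearMap.coe_toContinuousLinearMap', LinearMap.coe_mk, AddHom.coe_mk, omul]
  ext <;> simp [Quaternion.re_mul, Quaternion.imI_mul, Quaternion.imJ_mul, Quaternion.imK_mul] <;> erw [QuaternionAlgebra.mk_mul_mk] <;> simp <;> first | exact Quaternion.re_zero.symm | exact Quaternion.imI_zero.symm | exact Quaternion.imJ_zero.symm | exact Quaternion.imK_zero.symm | ring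

lemma emb2_mul : ∀ z w, omul (emb2 z) (emb2 w) = emb2 (z * w) := by
  intro z w
  simp only [emb2, LinearMap.coe_toContinuousLinearMap', LinearMap.coe_mk, AddHom.coe_mk, omul]
  ext <;> simp [Quaternion.re_mul, Quaternion.imI_mul, Quaternion.imJ_mul, Quaternion.imK_mul] <;> erw [QuaternionAlgebra.mk_mul_mk] <;> simp <;> first | exact Quaternion.re_zero.symm | exact Quaternion.imI_zero.symm | exact Quaternion.imJ_zero.symm | exact Quaternion.imK_zero.symm | ring

lemma emb4_mul : ∀ z w, omul (emb4 z) (emb4 w) = emb4 (z * w) := by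
  intro z w
  simp only [emb4, LinearMap.coe_toContinuousLinearMap', LinearMap.coe_mk, AddHom.coe_mk, omul]
  ext <;> simp [Quaternion.re_mul, Quaternion.imI_mul, Quaternion.imJ_mul, Quaternion.imK_mul,
    Quaternion.re_star, Quaternion.imI_star, Quaternion.imJ_star, Quaternion.imK_star] <;> erw [QuaternionAlgebra.mk_mul_mk, QuaternionAlgebra.mk_mul_mk] <;> simp <;> ring

lemma octExp_e1 (α : ℝ) : octExp (α • e1) = ((⟨Real.cos α, Real.sin α, 0, 0⟩ : Quaternion ℝ), 0) := by
  have h : α • e1 = emb1 (α * Complex.I) := by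
    simp only [emb1, LinearMap.coe_toContinuousLinearMap', LinearMap.coe_mk, AddHom.coe_mk, e1]
    ext <;> simp <;> first | exact Quaternion.re_zero | exact Quaternion.imI_zero | exact Quaternion.imJ_zero | exact Quaternion.imK_zero | (erw [QuaternionAlgebra.smul_mk]; simp)
  rw [h, octExp_emb emb1 (by simp [emb1, oone, Prod.ext_iff, Quaternion.ext_iff]; rfl) emb1_mul]
  simp [emb1, Complex.exp_mul_I, Prod.ext_iff, Quaternion.ext_iff, Complex.cos_ofReal_re, Complex.sin_ofReal_re]; rfl

lemma octExp_e2 (α : ℝ) : octExp (α • e2) = ((⟨Real.cos α, 0, Real.sin α, 0⟩ : Quaternion ℝ), 0) := by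
  have h : α • e2 = emb2 (α * Complex.I) := by
    simp only [emb2, LinearMap.coe_toContinuousLinearMap', LinearMap.coe_mk, AddHom.coe_mk, e2]
    ext <;> simp <;> first | exact Quaternion.re_zero | exact Quaternion.imI_zero | exact Quaternion.imJ_zero | exact Quaternion.imK_zero | (erw [QuaternionAlgebra.smul_mk]; simp)
  rw [h, octExp_emb emb2 (by simp [emb2, oone, Prod.ext_iff, Quaternion.ext_iff]; rfl) emb2_mul]
  simp [emb2, Complex.exp_mul_I, Prod.ext_iff, Quaternion.ext_iff, Complex.cos_ofReal_re, Complex.sin_ofReal_re]; rfl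

lemma octExp_e4 (α : ℝ) : octExp (α • e4) =
    ((⟨Real.cos α, 0, 0, 0⟩ : Quaternion ℝ), (⟨Real.sin α, 0, 0, 0⟩ : Quaternion ℝ)) := by
  have h : α • e4 = emb4 (α * Complex.I) := by
    simp only [emb4, LinearMap.coe_toContinuousLinearMap', LinearMap.coe_mk, AddHom.coe_mk, e4]
    ext <;> simp <;> first | exact Quaternion.re_zero | exact Quaternion.imI_zero | exact Quaternion.imJ_zero | exact Quaternion.imK_zero | (erw [QuaternionAlgebra.smul_mk]; simp)
  rw [h, octExp_emb emb4 (by simp [emb4, oone, Prod.ext_iff, Quaternion.ext_iff]; exact ⟨rfl, rfl⟩) emb4_mul]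
  simp [emb4, Complex.exp_mul_I, Prod.ext_iff, Quaternion.ext_iff, Complex.cos_ofReal_re, Complex.sin_ofReal_re]; rfl

lemma omul_mk (p q a b : Quaternion ℝ) :
    omul (p, q) (a, b) = (p * a - star b * q, b * p + q * star a) := rfl

lemma qzero : (0 : Quaternion ℝ) = (⟨0, 0, 0, 0⟩ : Quaternion ℝ) := rfl

lemma qmul_s8 (a1 a2 a3 a4 b1 b2 b3 b4 : ℝ) :
    @HMul.hMul (Quaternion ℝ) (Quaternion ℝ) (Quaternion ℝ) _ ⟨a1, a2, a3, a4⟩ ⟨b1, b2, b3, b4⟩ =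
      (⟨a1 * b1 + (-1) * a2 * b2 + (-1) * a3 * b3 + 0 * (-1) * a3 * b4 - (-1) * (-1) * a4 * b4,
        a1 * b2 + a2 * b1 + 0 * a2 * b2 - (-1) * a3 * b4 + (-1) * a4 * b3,
        a1 * b3 + (-1) * a2 * b4 + a3 * b1 + 0 * a3 * b2 - (-1) * a4 * b2,
        a1 * b4 + a2 * b3 + 0 * a2 * b4 - a3 * b2 + a4 * b1⟩ : Quaternion ℝ) := rfl

lemma qsub (a1 a2 a3 a4 b1 b2 b3 b4 : ℝ) :
    @HSub.hSub (Quaternion ℝ) (Quaternion ℝ) (Quaternion ℝ) _ ⟨a1, a2, a3, a4⟩ ⟨b1, b2, b3, b4⟩ =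
      (⟨a1 - b1, a2 - b2, a3 - b3, a4 - b4⟩ : Quaternion ℝ) := rfl

lemma qadd (a1 a2 a3 a4 b1 b2 b3 b4 : ℝ) :
    @HAdd.hAdd (Quaternion ℝ) (Quaternion ℝ) (Quaternion ℝ) _ ⟨a1, a2, a3, a4⟩ ⟨b1, b2, b3, b4⟩ =
      (⟨a1 + b1, a2 + b2, a3 + b3, a4 + b4⟩ : Quaternion ℝ) := rfl

lemma qstar (a1 a2 a3 a4 : ℝ) :
    @star (Quaternion ℝ) _ ⟨a1, a2, a3, a4⟩ =
      (⟨a1 + 0 * a2, -a2, -a3, -a4⟩ : Quaternion ℝ) := rfl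

lemma qneg (a1 a2 a3 a4 : ℝ) :
    @Neg.neg (Quaternion ℝ) _ ⟨a1, a2, a3, a4⟩ =
      (⟨-a1, -a2, -a3, -a4⟩ : Quaternion ℝ) := rfl

lemma qinj (a1 a2 a3 a4 b1 b2 b3 b4 : ℝ) :
    (@Eq (Quaternion ℝ) ⟨a1, a2, a3, a4⟩ ⟨b1, b2, b3, b4⟩) =
      (a1 = b1 ∧ a2 = b2 ∧ a3 = b3 ∧ a4 = b4) :=
  QuaternionAlgebra.mk.injEq _ _ _ _ _ _ _ _

set_option maxHeartbeats 1000000 in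
theorem octonion_e2_commutation (o : Octonion) (α₁ α₂ α₃ : ℝ) :
    omul (omul (omul (omul o e2) (octExp ((-α₁) • e1))) (octExp ((-α₂) • e2)))
        (octExp ((-α₃) • e4)) =
      omul (omul (omul (omul o (octExp (α₁ • e1))) (octExp ((-α₂) • e2)))
        (octExp (α₃ • e4))) e2 := by 
  obtain ⟨⟨p1, p2, p3, p4⟩, ⟨q1, q2, q3, q4⟩⟩ := o
  simp only [octExp_e1, octExp_e2, octExp_e4, Real.cos_neg, Real.sin_neg]
  generalize Real.cos α₁ = c1
  generalize Real.sin α₁ = s1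
  generalize Real.cos α₂ = c2
  generalize Real.sin α₂ = s2
  generalize Real.cos α₃ = c3
  generalize Real.sin α₃ = s3
  rw [show e2 = (((⟨0,0,1,0⟩ : Quaternion ℝ)), (0 : Quaternion ℝ)) from rfl]
  unfold omul
  rw [Prod.mk.injEq]
  simp only [Prod.fst, Prod.snd, star_zero, zero_mul, mul_zero, add_zero, zero_add,
    sub_zero, zero_sub, neg_zero]
  rw [qzero]
  simp only [qstar, qmul_s8, qsub, qadd, qneg]
  rw [qinj, qinj]
  and_intros <;> ring
end
end

section
/- An element s = (s₀,s₁,s₂,s₃) of the quadruple-complex algebra 𝔽 is ⊙-invertible if and only if δ(s) := ((s₀−s₃)²+(s₁+s₂)²)·((s₀+s₃)²+(s₁−s₂)²) ≠ 0; in that case the inverse is (1/δ)·( s₀(s₀²+s₁²+s₂²−s₃²)+2s₁s₂s₃, −s₁(s₀²+s₁²−s₂²+s₃²)−2s₀s₂s₃, −s₂(s₀²−s₁²+s₂²+s₃²)−2s₀s₁s₃, s₃(−s₀²+s₁²+s₂²+s₃²)+2s₀s₁s₂ ). -/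
noncomputable section

/-- The quadruple-complex algebra 𝔽 = ℂ⁴ (componentwise addition). -/
abbrev Fq : Type := ℂ × ℂ × ℂ × ℂ

/-- The quadruple-complex product ⊙. -/
def qmul (s t : Fq) : Fq :=
  (s.1 * t.1 - s.2.1 * t.2.1 - s.2.2.1 * t.2.2.1 + s.2.2.2 * t.2.2.2,
   s.1 * t.2.1 + s.2.1 * t.1 - s.2.2.1 * t.2.2.2 - s.2.2.2 * t.2.2.1,
   s.1 * t.2.2.1 + s.2.2.1 * t.1 - s.2.1 * t.2.2.2 - s.2.2.2 * t.2.1,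
   s.1 * t.2.2.2 + s.2.2.2 * t.1 + s.2.1 * t.2.2.1 + s.2.2.1 * t.2.1)

/-- The unit (1,0,0,0) of 𝔽. -/
def qone : Fq := (1, 0, 0, 0)


lemma inv_case (s : Fq) :
    (((s.1 - s.2.2.2) ^ 2 + (s.2.1 + s.2.2.1) ^ 2) *
        ((s.1 + s.2.2.2) ^ 2 + (s.2.1 - s.2.2.1) ^ 2) ≠ 0 →
      qmul s
        ((((s.1 - s.2.2.2) ^ 2 + (s.2.1 + s.2.2.1) ^ 2) *
            ((s.1 + s.2.2.2) ^ 2 + (s.2.1 - s.2.2.1) ^ 2))⁻¹ •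
          ((s.1 * (s.1 ^ 2 + s.2.1 ^ 2 + s.2.2.1 ^ 2 - s.2.2.2 ^ 2) +
              2 * s.2.1 * s.2.2.1 * s.2.2.2,
            -s.2.1 * (s.1 ^ 2 + s.2.1 ^ 2 - s.2.2.1 ^ 2 + s.2.2.2 ^ 2) -
              2 * s.1 * s.2.2.1 * s.2.2.2,
            -s.2.2.1 * (s.1 ^ 2 - s.2.1 ^ 2 + s.2.2.1 ^ 2 + s.2.2.2 ^ 2) -
              2 * s.1 * s.2.1 * s.2.2.2,
            s.2.2.2 * (-s.1 ^ 2 + s.2.1 ^ 2 + s.2.2.1 ^ 2 + s.2.2.2 ^ 2) +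
              2 * s.1 * s.2.1 * s.2.2.1) : Fq)) = qone) := by
  intro h
  simp only [qmul, qone, Prod.smul_mk, smul_eq_mul, Prod.mk.injEq]
  refine ⟨?_, ?_, ?_, ?_⟩
  · linear_combination mul_inv_cancel₀ h
  all_goals field_simp
  all_goals ring


def qdelta (s : Fq) : ℂ :=
  ((s.1 - s.2.2.2) ^ 2 + (s.2.1 + s.2.2.1) ^ 2) *
    ((s.1 + s.2.2.2) ^ 2 + (s.2.1 - s.2.2.1) ^ 2)

lemma qdelta_mul (s t : Fq) : qdelta (qmul s t) = qdelta s * qdelta t := by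
  simp only [qdelta, qmul]; ring

theorem qmul_inverse_iff (s : Fq) :
    ((∃ t : Fq, qmul s t = qone) ↔
      ((s.1 - s.2.2.2) ^ 2 + (s.2.1 + s.2.2.1) ^ 2) *
        ((s.1 + s.2.2.2) ^ 2 + (s.2.1 - s.2.2.1) ^ 2) ≠ 0) ∧
    (((s.1 - s.2.2.2) ^ 2 + (s.2.1 + s.2.2.1) ^ 2) *
        ((s.1 + s.2.2.2) ^ 2 + (s.2.1 - s.2.2.1) ^ 2) ≠ 0 →
      qmul s
        ((((s.1 - s.2.2.2) ^ 2 + (s.2.1 + s.2.2.1) ^ 2) *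
            ((s.1 + s.2.2.2) ^ 2 + (s.2.1 - s.2.2.1) ^ 2))⁻¹ •
          ((s.1 * (s.1 ^ 2 + s.2.1 ^ 2 + s.2.2.1 ^ 2 - s.2.2.2 ^ 2) +
              2 * s.2.1 * s.2.2.1 * s.2.2.2,
            -s.2.1 * (s.1 ^ 2 + s.2.1 ^ 2 - s.2.2.1 ^ 2 + s.2.2.2 ^ 2) -
              2 * s.1 * s.2.2.1 * s.2.2.2,
            -s.2.2.1 * (s.1 ^ 2 - s.2.1 ^ 2 + s.2.2.1 ^ 2 + s.2.2.2 ^ 2) -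
              2 * s.1 * s.2.1 * s.2.2.2,
            s.2.2.2 * (-s.1 ^ 2 + s.2.1 ^ 2 + s.2.2.1 ^ 2 + s.2.2.2 ^ 2) +
              2 * s.1 * s.2.1 * s.2.2.1) : Fq)) = qone) := by
  constructor
  · constructor
    · rintro ⟨t, ht⟩ h
      have h1 : (1 : ℂ) = qdelta s * qdelta t := by
        rw [← qdelta_mul, ht]; simp [qdelta, qone]
      rw [show ((s.1 - s.2.2.2) ^ 2 + (s.2.1 + s.2.2.1) ^ 2) *
        ((s.1 + s.2.2.2) ^ 2 + (s.2.1 - s.2.2.1) ^ 2) = qdelta s from rfl] at h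
      rw [h] at h1
      norm_num at h1
    · intro h
      exact ⟨_, inv_case s h⟩
  · exact inv_case s
end
end

section
/- Argument-scaling theorem for the OFT: if u : ℝ³ → 𝕆 is integrable, a, b, c are nonzero reals, and v(x₁,x₂,x₃) = u(x₁/a, x₂/b, x₃/c), then the OFT of v at (f₁,f₂,f₃) equals |abc|·U(af₁, bf₂, cf₃), where U is the OFT of u. -/
noncomputable section
open MeasureTheory Real

/-! ### Auxiliary change-of-variables machinery -/

lemma sigmaFinite_smul_of_ne_top {α : Type*} [MeasurableSpace α] (μ : Measure α)
    [SigmaFinite μ] {c : ENNReal} (hc : c ≠ ⊤) : SigmaFinite (c • μ) := by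
  constructor
  exact ⟨⟨spanningSets μ, fun _ => trivial,
    fun n => by
      simp only [Measure.smul_apply, smul_eq_mul]
      exact ENNReal.mul_lt_top hc.lt_top (measure_spanningSets_lt_top μ n),
    iUnion_spanningSets μ⟩⟩

lemma smul_prod_meas {c : ENNReal} (hc : c ≠ ⊤) {α β : Type*} [MeasurableSpace α]
    [MeasurableSpace β] (μ : Measure α) (ν : Measure β) [SigmaFinite μ] [SigmaFinite ν] :
    (c • μ).prod ν = c • (μ.prod ν) := by
  haveI := sigmaFinite_smul_of_ne_top μ hc
  refine Measure.prod_eq (μ := c • μ) (ν := ν)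
    (μν := c • (μ.prod ν)) fun s t hs ht => ?_
  simp [Measure.prod_prod, mul_assoc]

lemma prod_smul_meas {c : ENNReal} (hc : c ≠ ⊤) {α β : Type*} [MeasurableSpace α]
    [MeasurableSpace β] (μ : Measure α) (ν : Measure β) [SigmaFinite μ] [SigmaFinite ν] :
    μ.prod (c • ν) = c • (μ.prod ν) := by
  haveI := sigmaFinite_smul_of_ne_top ν hc
  refine Measure.prod_eq (μ := μ) (ν := c • ν)
    (μν := c • (μ.prod ν)) fun s t hs ht => ?_
  simp only [Measure.smul_apply, Measure.prod_prod, smul_eq_mul]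
  ring

lemma map_volume_scale {a b c : ℝ} (ha : a ≠ 0) (hb : b ≠ 0) (hc : c ≠ 0) :
    Measure.map (fun y : ℝ × ℝ × ℝ => (a * y.1, b * y.2.1, c * y.2.2)) volume
      = ENNReal.ofReal |(a * b * c)⁻¹| • volume := by
  have hfun : (fun y : ℝ × ℝ × ℝ => (a * y.1, b * y.2.1, c * y.2.2))
      = Prod.map (fun x : ℝ => a * x)
          (Prod.map (fun x : ℝ => b * x) (fun x : ℝ => c * x)) := rfl
  rw [hfun, Measure.volume_eq_prod ℝ (ℝ × ℝ),
    ← Measure.map_prod_map _ _ (measurable_const_mul a)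
      (Measurable.prodMap (measurable_const_mul b) (measurable_const_mul c))]
  rw [Measure.volume_eq_prod ℝ ℝ]
  rw [← Measure.map_prod_map _ _ (measurable_const_mul b) (measurable_const_mul c)]
  haveI h1 := sigmaFinite_smul_of_ne_top (volume : Measure ℝ) (ENNReal.ofReal_ne_top (r := |b⁻¹|))
  haveI h2 := sigmaFinite_smul_of_ne_top (volume : Measure ℝ) (ENNReal.ofReal_ne_top (r := |c⁻¹|))
  rw [
    Real.map_volume_mul_left ha, Real.map_volume_mul_left hb, Real.map_volume_mul_left hc,
    smul_prod_meas ENNReal.ofReal_ne_top, prod_smul_meas ENNReal.ofReal_ne_top,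
    smul_prod_meas ENNReal.ofReal_ne_top]
  rw [smul_smul, prod_smul_meas (ENNReal.mul_ne_top ENNReal.ofReal_ne_top ENNReal.ofReal_ne_top),
    smul_smul, ← ENNReal.ofReal_mul (abs_nonneg _), ← ENNReal.ofReal_mul (abs_nonneg _),
    ← Measure.volume_eq_prod, ← Measure.volume_eq_prod]
  congr 1
  rw [← abs_mul, ← abs_mul, mul_inv, mul_inv]
  ring_nf

/-- Change of variables for an arbitrary (not necessarily integrable) function under the
coordinatewise scaling of `ℝ³`. -/
lemma integral_comp_scale {F : Type*} [NormedAddCommGroup F] [NormedSpace ℝ F]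
    (g : ℝ × ℝ × ℝ → F) {a b c : ℝ} (ha : a ≠ 0) (hb : b ≠ 0) (hc : c ≠ 0) :
    (∫ x : ℝ × ℝ × ℝ, g x) =
      |a * b * c| • ∫ y : ℝ × ℝ × ℝ, g (a * y.1, b * y.2.1, c * y.2.2) := by
  let e : (ℝ × ℝ × ℝ) ≃ₜ (ℝ × ℝ × ℝ) :=
    (Homeomorph.mulLeft₀ a ha).prodCongr
      ((Homeomorph.mulLeft₀ b hb).prodCongr (Homeomorph.mulLeft₀ c hc))
  have hcoe : ⇑e.toMeasurableEquiv = fun y : ℝ × ℝ × ℝ => (a * y.1, b * y.2.1, c * y.2.2) := rfl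
  have h1 : (∫ y : ℝ × ℝ × ℝ, g (a * y.1, b * y.2.1, c * y.2.2)) =
      ∫ x, g x ∂(Measure.map e.toMeasurableEquiv volume) := by
    rw [MeasureTheory.integral_map_equiv, hcoe]
  rw [h1, hcoe, map_volume_scale ha hb hc, integral_smul_measure,
    ENNReal.toReal_ofReal (abs_nonneg _), smul_smul]
  have habc : a * b * c ≠ 0 := by
    simp [ha, hb, hc]
  rw [abs_inv, mul_inv_cancel₀ (by simpa using habc), one_smul]

theorem OFT_scaling (u : ℝ × ℝ × ℝ → Octonion) (hu : Integrable u)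
    (a b c : ℝ) (ha : a ≠ 0) (hb : b ≠ 0) (hc : c ≠ 0) (f : ℝ × ℝ × ℝ) :
    OFT (fun x => u (x.1 / a, x.2.1 / b, x.2.2 / c)) f =
      |a * b * c| • OFT u (a * f.1, b * f.2.1, c * f.2.2) := by
  have key := integral_comp_scale (F := Octonion)
    (fun x : ℝ × ℝ × ℝ =>
      omul (omul (omul (u (x.1 / a, x.2.1 / b, x.2.2 / c))
            (octExp ((-(2 * π * f.1 * x.1)) • e1)))
          (octExp ((-(2 * π * f.2.1 * x.2.1)) • e2)))
        (octExp ((-(2 * π * f.2.2 * x.2.2)) • e4))) ha hb hc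
  unfold OFT
  rw [key]
  congr 1
  congr 1
  funext y
  have h1 : a * y.1 / a = y.1 := by field_simp
  have h2 : b * y.2.1 / b = y.2.1 := by field_simp
  have h3 : c * y.2.2 / c = y.2.2 := by field_simp
  have e1' : -(2 * π * f.1 * (a * y.1)) = -(2 * π * (a * f.1) * y.1) := by ring
  have e2' : -(2 * π * f.2.1 * (b * y.2.1)) = -(2 * π * (b * f.2.1) * y.2.1) := by ring
  have e3' : -(2 * π * f.2.2 * (c * y.2.2)) = -(2 * π * (c * f.2.2) * y.2.2) := by ring
  simp only [h1, h2, h3, e1', e2', e3']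
end
end
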